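/- Let Y ~ N(μ, s²) with s > 0, let a ∈ ℝ and ε > 0, and define the improvement I = ε² − min{(Y − a)², ε²}. Then E[I] = [ε² − (μ − a)²]·(Φ(u₂) − Φ(u₁)) + s²·[(u₂φ(u₂) − u₁φ(u₁)) − (Φ(u₂) − Φ(u₁))] + 2(μ − a)·s·(φ(u₂) − φ(u₁)), where u₁ = (a − μ − ε)/s, u₂ = (a − μ + ε)/s, and φ, Φ are the standard normal pdf and cdf. -/

import Mathlib

open MeasureTheory ProbabilityTheory Real
open scoped NNReal ENNReal

theorem stmt_7 (μ s a ε : ℝ) (hs : 0 < s) (hε : 0 < ε)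
    (φ : ℝ → ℝ) (Φ : ℝ → ℝ)
    (hφ : ∀ u, φ u = (Real.sqrt (2 * π))⁻¹ * Real.exp (-u ^ 2 / 2))
    (hΦ : ∀ u, Φ u = ∫ t in Set.Iic u, φ t)
    (u₁ u₂ : ℝ)
    (hu₁ : u₁ = (a - μ - ε) / s) (hu₂ : u₂ = (a - μ + ε) / s) :
    ∫ y, (ε ^ 2 - min ((y - a) ^ 2) (ε ^ 2)) ∂(gaussianReal μ ((s ^ 2).toNNReal)) =
      (ε ^ 2 - (μ - a) ^ 2) * (Φ u₂ - Φ u₁)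
        + s ^ 2 * ((u₂ * φ u₂ - u₁ * φ u₁) - (Φ u₂ - Φ u₁))
        + 2 * (μ - a) * s * (φ u₂ - φ u₁) := by
  have hs' : s ≠ 0 := ne_of_gt hs
  -- basic facts about φ
  have hφ_cont : Continuous φ := by
    have hfn : φ = fun u => (Real.sqrt (2 * π))⁻¹ * Real.exp (-u ^ 2 / 2) := funext hφ
    rw [hfn]; continuity
  have hφ_int : Integrable φ := by
    have hfn : φ = fun u => (Real.sqrt (2 * π))⁻¹ * Real.exp (-(2⁻¹ : ℝ) * u ^ 2) := by
      funext u; rw [hφ]; ring_nf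
    rw [hfn]
    exact (integrable_exp_neg_mul_sq (by norm_num)).const_mul _
  have hφ_deriv : ∀ u : ℝ, HasDerivAt φ (-u * φ u) u := by
    intro u
    have h1 : HasDerivAt (fun x : ℝ => -x ^ 2 / 2) (-u) u := by
      have h := ((hasDerivAt_pow 2 u).neg.div_const 2)
      exact h.congr_deriv (by norm_num; ring)
    have h2 := (h1.exp).const_mul ((Real.sqrt (2 * π))⁻¹)
    have hfn : φ = fun x => (Real.sqrt (2 * π))⁻¹ * Real.exp (-x ^ 2 / 2) := funext hφ
    have h3 : HasDerivAt φ ((Real.sqrt (2 * π))⁻¹ * (Real.exp (-u ^ 2 / 2) * -u)) u := by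
      rw [hfn]; exact h2
    convert h3 using 1
    rw [hφ u]; ring
  have hv : (s ^ 2).toNNReal ≠ 0 := by
    simp only [ne_eq, Real.toNNReal_eq_zero, not_le]
    positivity
  -- the pdf in terms of φ
  have hp : ∀ y, gaussianPDFReal μ (s ^ 2).toNNReal y = s⁻¹ * φ ((y - μ) / s) := by
    intro y
    rw [gaussianPDFReal, hφ]
    rw [Real.coe_toNNReal _ (sq_nonneg s), Real.sqrt_mul (by positivity : (0:ℝ) ≤ 2 * π),
      Real.sqrt_sq hs.le, mul_inv, div_pow]
    rw [show (-((y - μ) ^ 2 / s ^ 2) / 2) = -(y - μ) ^ 2 / (2 * s ^ 2) by ring]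
    ring
  -- rewrite the integral against the density
  have hmeas : Measurable fun y => (gaussianPDFReal μ (s ^ 2).toNNReal y).toNNReal :=
    (measurable_gaussianPDFReal _ _).real_toNNReal
  rw [gaussianReal_of_var_ne_zero _ hv]
  have hgpdf : (gaussianPDF μ ((s ^ 2).toNNReal))
      = fun y => (((gaussianPDFReal μ ((s ^ 2).toNNReal) y).toNNReal : ℝ≥0) : ℝ≥0∞) := rfl
  rw [hgpdf, integral_withDensity_eq_integral_smul hmeas]
  -- integrand as an indicator
  have hind : ∀ y : ℝ, ((gaussianPDFReal μ ((s ^ 2).toNNReal) y).toNNReal : ℝ≥0)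
        • (ε ^ 2 - min ((y - a) ^ 2) (ε ^ 2))
      = Set.indicator (Set.Icc (a - ε) (a + ε))
          (fun y => (ε ^ 2 - (y - a) ^ 2) * (s⁻¹ * φ ((y - μ) / s))) y := by
    intro y
    rw [NNReal.smul_def, Real.coe_toNNReal _ (gaussianPDFReal_nonneg _ _ _), hp, smul_eq_mul]
    by_cases hy : y ∈ Set.Icc (a - ε) (a + ε)
    · rw [Set.indicator_of_mem hy]
      obtain ⟨h1, h2⟩ := hy
      have habs : (y - a) ^ 2 ≤ ε ^ 2 := by nlinarith
      rw [min_eq_left habs]; ring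
    · rw [Set.indicator_of_notMem hy]
      have habs : ε ^ 2 ≤ (y - a) ^ 2 := by
        simp only [Set.mem_Icc, not_and_or, not_le] at hy
        rcases hy with h | h <;> nlinarith
      rw [min_eq_right habs]; ring
  rw [show (fun y => ((gaussianPDFReal μ ((s ^ 2).toNNReal) y).toNNReal : ℝ≥0)
        • (ε ^ 2 - min ((y - a) ^ 2) (ε ^ 2)))
      = Set.indicator (Set.Icc (a - ε) (a + ε))
          (fun y => (ε ^ 2 - (y - a) ^ 2) * (s⁻¹ * φ ((y - μ) / s))) from funext hind]
  rw [integral_indicator measurableSet_Icc, integral_Icc_eq_integral_Ioc,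
    ← intervalIntegral.integral_of_le (by linarith : a - ε ≤ a + ε)]
  -- change of variables
  have hab : ∫ y in (a - ε)..(a + ε), (ε ^ 2 - (y - a) ^ 2) * (s⁻¹ * φ ((y - μ) / s))
      = ∫ u in u₁..u₂, (ε ^ 2 - (s * u + μ - a) ^ 2) * φ u := by
    have hcv := intervalIntegral.integral_comp_mul_add
      (a := a - ε) (b := a + ε)
      (f := fun u => (ε ^ 2 - (s * u + μ - a) ^ 2) * (s⁻¹ * φ u))
      (hc := inv_ne_zero hs') (d := -(μ / s))
    have hl : ∀ y : ℝ, (ε ^ 2 - (y - a) ^ 2) * (s⁻¹ * φ ((y - μ) / s))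
        = (fun u => (ε ^ 2 - (s * u + μ - a) ^ 2) * (s⁻¹ * φ u)) (s⁻¹ * y + -(μ / s)) := by
      intro y
      simp only
      have h1 : s * (s⁻¹ * y + -(μ / s)) + μ - a = y - a := by field_simp; ring
      have h2 : s⁻¹ * y + -(μ / s) = (y - μ) / s := by field_simp; ring
      rw [h1, h2]
    have he1 : s⁻¹ * (a - ε) + -(μ / s) = u₁ := by rw [hu₁]; field_simp; ring
    have he2 : s⁻¹ * (a + ε) + -(μ / s) = u₂ := by rw [hu₂]; field_simp; ring
    calc ∫ y in (a - ε)..(a + ε), (ε ^ 2 - (y - a) ^ 2) * (s⁻¹ * φ ((y - μ) / s))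
        = ∫ y in (a - ε)..(a + ε),
            (fun u => (ε ^ 2 - (s * u + μ - a) ^ 2) * (s⁻¹ * φ u)) (s⁻¹ * y + -(μ / s)) := by
          apply intervalIntegral.integral_congr; intro y _; exact hl y
      _ = (s⁻¹)⁻¹ • ∫ u in (s⁻¹ * (a - ε) + -(μ / s))..(s⁻¹ * (a + ε) + -(μ / s)),
            (ε ^ 2 - (s * u + μ - a) ^ 2) * (s⁻¹ * φ u) := hcv
      _ = s • ∫ u in u₁..u₂, (ε ^ 2 - (s * u + μ - a) ^ 2) * (s⁻¹ * φ u) := by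
          rw [he1, he2, inv_inv]
      _ = ∫ u in u₁..u₂, s * ((ε ^ 2 - (s * u + μ - a) ^ 2) * (s⁻¹ * φ u)) := by
          rw [smul_eq_mul, ← intervalIntegral.integral_const_mul]
      _ = ∫ u in u₁..u₂, (ε ^ 2 - (s * u + μ - a) ^ 2) * φ u := by
          apply intervalIntegral.integral_congr; intro u _
          field_simp
  rw [hab]
  -- split the integral
  have hint1 : IntervalIntegrable φ volume u₁ u₂ := hφ_cont.intervalIntegrable _ _
  have hint2 : IntervalIntegrable
      (fun u => (s ^ 2 - s ^ 2 * u ^ 2 + 2 * (a - μ) * s * u) * φ u) volume u₁ u₂ :=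
    (Continuous.mul (by fun_prop) hφ_cont).intervalIntegrable _ _
  have hsplit : ∫ u in u₁..u₂, (ε ^ 2 - (s * u + μ - a) ^ 2) * φ u
      = (ε ^ 2 - (a - μ) ^ 2 - s ^ 2) * (∫ u in u₁..u₂, φ u)
        + ∫ u in u₁..u₂, (s ^ 2 - s ^ 2 * u ^ 2 + 2 * (a - μ) * s * u) * φ u := by
    rw [← intervalIntegral.integral_const_mul, ← intervalIntegral.integral_add
      (hint1.const_mul _) hint2]
    apply intervalIntegral.integral_congr; intro u _
    simp only; ring
  rw [hsplit]
  -- evaluate the two pieces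
  have hΔ : ∫ u in u₁..u₂, φ u = Φ u₂ - Φ u₁ := by
    rw [hΦ, hΦ]
    exact (intervalIntegral.integral_Iic_sub_Iic hφ_int.integrableOn hφ_int.integrableOn).symm
  have hG : ∀ u : ℝ, HasDerivAt (fun u => (s ^ 2 * u - 2 * (a - μ) * s) * φ u)
      ((s ^ 2 - s ^ 2 * u ^ 2 + 2 * (a - μ) * s * u) * φ u) u := by
    intro u
    have h1 : HasDerivAt (fun u : ℝ => s ^ 2 * u - 2 * (a - μ) * s) (s ^ 2) u := by
      simpa using ((hasDerivAt_id u).const_mul (s ^ 2)).sub_const (2 * (a - μ) * s)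
    have h2 := h1.mul (hφ_deriv u)
    exact h2.congr_deriv (by ring)
  have hFTC : ∫ u in u₁..u₂, (s ^ 2 - s ^ 2 * u ^ 2 + 2 * (a - μ) * s * u) * φ u
      = (s ^ 2 * u₂ - 2 * (a - μ) * s) * φ u₂ - (s ^ 2 * u₁ - 2 * (a - μ) * s) * φ u₁ :=
    intervalIntegral.integral_eq_sub_of_hasDerivAt (fun u _ => hG u) hint2
  rw [hΔ, hFTC]
  ring
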